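/- Let F be an anti-invariant Riemannian submersion from a Sasakian manifold with φ(ker F_*) = (ker F_*)^⊥. Then (ker F_*)^⊥ defines a totally geodesic foliation on M if and only if A_X φY = 0 for all horizontal vector fields X, Y. -/

import Mathlib

/-- Algebraic model of a Riemannian submersion `F : (M,g_M) → (N,g_N)`:
`Fn` plays the role of smooth functions on `M`, `VF` of vector fields on `M`,
`g` is the metric, `der` the directional derivative, `nabla` the Levi-Civita
connection, `bracket` the Lie bracket, and `vert`/`horiz` the projections onto
the vertical distribution `ker F_*` and the horizontal distribution
`(ker F_*)^⊥` determined by the fibers of the submersion. -/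
structure RiemannianSubmersionData (Fn VF : Type) [CommRing Fn] [Algebra ℝ Fn]
    [AddCommGroup VF] [Module Fn VF] where
  g : VF → VF → Fn
  g_symm : ∀ X Y, g X Y = g Y X
  g_add_left : ∀ X Y Z, g (X + Y) Z = g X Z + g Y Z
  g_smul_left : ∀ (f : Fn) (X Y : VF), g (f • X) Y = f * g X Y
  g_nondeg : ∀ X, (∀ Y, g X Y = 0) → X = 0
  der : VF → Fn → Fn
  der_add : ∀ X f₁ f₂, der X (f₁ + f₂) = der X f₁ + der X f₂
  der_mul : ∀ X f₁ f₂, der X (f₁ * f₂) = f₁ * der X f₂ + f₂ * der X f₁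
  bracket : VF → VF → VF
  nabla : VF → VF → VF
  nabla_add_left : ∀ X Y Z, nabla (X + Y) Z = nabla X Z + nabla Y Z
  nabla_add_right : ∀ X Y Z, nabla X (Y + Z) = nabla X Y + nabla X Z
  nabla_smul_left : ∀ (f : Fn) (X Y : VF), nabla (f • X) Y = f • nabla X Y
  nabla_smul_right : ∀ (f : Fn) (X Y : VF),
    nabla X (f • Y) = f • nabla X Y + der X f • Y
  torsion_free : ∀ X Y, nabla X Y - nabla Y X = bracket X Y
  compat : ∀ X Y Z, der X (g Y Z) = g (nabla X Y) Z + g Y (nabla X Z)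
  vert : VF → VF
  horiz : VF → VF
  vert_add : ∀ X Y, vert (X + Y) = vert X + vert Y
  vert_smul : ∀ (f : Fn) (X : VF), vert (f • X) = f • vert X
  horiz_add : ∀ X Y, horiz (X + Y) = horiz X + horiz Y
  horiz_smul : ∀ (f : Fn) (X : VF), horiz (f • X) = f • horiz X
  vert_add_horiz : ∀ X, vert X + horiz X = X
  vert_vert : ∀ X, vert (vert X) = vert X
  vert_horiz : ∀ X, vert (horiz X) = 0
  horiz_vert : ∀ X, horiz (vert X) = 0
  g_vert_horiz : ∀ X Y, g (vert X) (horiz Y) = 0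
  vert_bracket : ∀ X Y, vert X = X → vert Y = Y → vert (bracket X Y) = bracket X Y

namespace RiemannianSubmersionData

variable {Fn VF : Type} [CommRing Fn] [Algebra ℝ Fn] [AddCommGroup VF] [Module Fn VF]

/-- O'Neill tensor `T_E F = H∇_{VE}(VF) + V∇_{VE}(HF)`. -/
def T (S : RiemannianSubmersionData Fn VF) (E F : VF) : VF :=
  S.horiz (S.nabla (S.vert E) (S.vert F)) + S.vert (S.nabla (S.vert E) (S.horiz F))

/-- O'Neill tensor `A_E F = V∇_{HE}(HF) + H∇_{HE}(VF)`. -/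
def A (S : RiemannianSubmersionData Fn VF) (E F : VF) : VF :=
  S.vert (S.nabla (S.horiz E) (S.horiz F)) + S.horiz (S.nabla (S.horiz E) (S.vert F))

end RiemannianSubmersionData

/-- A Riemannian submersion from a Sasakian manifold `M(φ,ξ,η,g)` onto a
Riemannian manifold: the total space carries an almost contact metric structure
`(phi, xi, eta, g)` satisfying the Sasakian condition
`(∇_X φ)Y = g(X,Y)ξ - η(Y)X` (and hence `R(ξ,X)Y = g(X,Y)ξ - η(Y)X`). -/
structure SasakianSubmersionData (Fn VF : Type) [CommRing Fn] [Algebra ℝ Fn]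
    [AddCommGroup VF] [Module Fn VF] extends RiemannianSubmersionData Fn VF where
  phi : VF → VF
  xi : VF
  eta : VF → Fn
  phi_add : ∀ X Y, phi (X + Y) = phi X + phi Y
  phi_smul : ∀ (f : Fn) (X : VF), phi (f • X) = f • phi X
  eta_add : ∀ X Y, eta (X + Y) = eta X + eta Y
  eta_smul : ∀ (f : Fn) (X : VF), eta (f • X) = f * eta X
  phi_phi : ∀ X, phi (phi X) = -X + eta X • xi
  phi_xi : phi xi = 0
  eta_phi : ∀ X, eta (phi X) = 0
  eta_xi : eta xi = 1
  g_phi : ∀ X Y, g (phi X) (phi Y) = g X Y - eta X * eta Y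
  eta_g : ∀ X, eta X = g X xi
  sasaki : ∀ X Y, nabla X (phi Y) - phi (nabla X Y) = g X Y • xi - eta Y • X
  curv_xi : ∀ X Y, nabla xi (nabla X Y) - nabla X (nabla xi Y)
      - nabla (bracket xi X) Y = g X Y • xi - eta Y • X

namespace SasakianSubmersionData

variable {Fn VF : Type} [CommRing Fn] [Algebra ℝ Fn] [AddCommGroup VF] [Module Fn VF]

/-- Vertical part `BX` of `φX` for horizontal `X`. -/
def B (S : SasakianSubmersionData Fn VF) (X : VF) : VF := S.vert (S.phi X)

/-- Horizontal (`μ`-)part `CX` of `φX` for horizontal `X`. -/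
def C (S : SasakianSubmersionData Fn VF) (X : VF) : VF := S.horiz (S.phi X)

/-- O'Neill tensor `T`. -/
def T (S : SasakianSubmersionData Fn VF) : VF → VF → VF :=
  S.toRiemannianSubmersionData.T

/-- O'Neill tensor `A`. -/
def A (S : SasakianSubmersionData Fn VF) : VF → VF → VF :=
  S.toRiemannianSubmersionData.A

/-- `F` is anti-invariant: `φ(ker F_*) ⊆ (ker F_*)^⊥`. -/
def AntiInvariant (S : SasakianSubmersionData Fn VF) : Prop :=
  ∀ U, S.vert U = U → S.horiz (S.phi U) = S.phi U


section Aux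

variable {Fn VF : Type} [CommRing Fn] [Algebra ℝ Fn] [AddCommGroup VF]
  [Module Fn VF] (S : SasakianSubmersionData Fn VF)

lemma nabla_zero_right (X : VF) : S.nabla X 0 = 0 := by
  have h := S.nabla_add_right X 0 0
  rw [add_zero] at h
  exact (left_eq_add.mp h)

lemma der_zero (X : VF) : S.der X 0 = 0 := by
  have h := S.der_add X 0 0
  rw [add_zero] at h
  exact (left_eq_add.mp h)

lemma der_one (X : VF) : S.der X 1 = 0 := by
  have h := S.der_mul X 1 1
  rw [mul_one, one_mul] at h
  exact (left_eq_add.mp h)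

lemma phi_zero : S.phi 0 = 0 := by
  have h := S.phi_add 0 0
  rw [add_zero] at h
  exact (left_eq_add.mp h)

lemma vert_zero : S.vert 0 = 0 := by
  have h := S.vert_add 0 0
  rw [add_zero] at h
  exact (left_eq_add.mp h)

lemma horiz_zero : S.horiz 0 = 0 := by
  have h := S.horiz_add 0 0
  rw [add_zero] at h
  exact (left_eq_add.mp h)

lemma g_zero_left (Y : VF) : S.g 0 Y = 0 := by
  have h := S.g_add_left 0 0 Y
  rw [add_zero] at h
  exact (left_eq_add.mp h)

lemma g_add_right (X Y Z : VF) : S.g X (Y + Z) = S.g X Y + S.g X Z := by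
  rw [S.g_symm, S.g_add_left, S.g_symm Y X, S.g_symm Z X]

lemma g_zero_right (X : VF) : S.g X 0 = 0 := by
  rw [S.g_symm]; exact S.g_zero_left X

lemma g_neg_right (X Y : VF) : S.g X (-Y) = -S.g X Y := by
  have h := S.g_add_right X Y (-Y)
  rw [add_neg_cancel, S.g_zero_right] at h
  exact eq_neg_of_add_eq_zero_right h.symm

lemma eta_zero : S.eta 0 = 0 := by
  have h := S.eta_add 0 0
  rw [add_zero] at h
  exact (left_eq_add.mp h)

lemma horiz_idem (X : VF) : S.horiz (S.horiz X) = S.horiz X := by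
  have h := S.vert_add_horiz (S.horiz X)
  rw [S.vert_horiz, zero_add] at h
  exact h

lemma half (x : Fn) (h : x + x = 0) : x = 0 := by
  have h2 : (2 : ℝ) • x = 0 := by rw [two_smul]; exact h
  have h3 := congrArg (fun y => ((2 : ℝ)⁻¹) • y) h2
  simpa [smul_smul] using h3

lemma g_horiz_vert' (X U : VF) (hX : S.horiz X = X) (hU : S.vert U = U) :
    S.g X U = 0 := by
  rw [S.g_symm, ← hU, ← hX]
  exact S.g_vert_horiz U X

lemma eta_horiz (hxi : S.vert S.xi = S.xi) (X : VF) (hX : S.horiz X = X) : S.eta X = 0 := by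
  rw [S.eta_g]
  exact S.g_horiz_vert' X S.xi hX hxi

lemma g_xi_xi : S.g S.xi S.xi = 1 := by
  rw [← S.eta_g, S.eta_xi]

lemma g_nabla_xi_xi (X : VF) : S.g (S.nabla X S.xi) S.xi = 0 := by
  have h := S.compat X S.xi S.xi
  rw [S.g_xi_xi, S.der_one, S.g_symm S.xi] at h
  exact half _ h.symm

lemma horiz_phi_horiz (hxi : S.vert S.xi = S.xi) (hanti : S.AntiInvariant)
    (heq : ∀ X, S.horiz X = X → ∃ U, S.vert U = U ∧ S.phi U = X) (X : VF) (hX : S.horiz X = X) :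
    S.horiz (S.phi X) = 0 := by
  apply S.g_nondeg
  intro W
  have hW := S.vert_add_horiz W
  obtain ⟨U, hU, hphiU⟩ := heq (S.horiz W) (S.horiz_idem W)
  have h1 : S.g (S.horiz (S.phi X)) (S.vert W) = 0 := by
    rw [S.g_symm]; exact S.g_vert_horiz W (S.phi X)
  have h2 : S.g (S.phi X) (S.phi U) = 0 := by
    rw [S.g_phi, S.g_horiz_vert' X U hX hU, S.eta_horiz hxi X hX, zero_mul,
      sub_zero]
  have h3 : S.g (S.vert (S.phi X)) (S.phi U) = 0 := by
    rw [← hanti U hU]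
    exact S.g_vert_horiz (S.phi X) (S.phi U)
  have h4 : S.g (S.phi X) (S.phi U)
      = S.g (S.vert (S.phi X)) (S.phi U) + S.g (S.horiz (S.phi X)) (S.phi U) := by
    rw [← S.g_add_left, S.vert_add_horiz]
  have h5 : S.g (S.horiz (S.phi X)) (S.horiz W) = 0 := by
    rw [← hphiU]
    rw [h2, h3, zero_add] at h4
    exact h4.symm
  calc S.g (S.horiz (S.phi X)) W
      = S.g (S.horiz (S.phi X)) (S.vert W + S.horiz W) := by rw [hW]
    _ = 0 := by rw [S.g_add_right, h1, h5, add_zero]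

lemma vert_phi_horiz (hxi : S.vert S.xi = S.xi) (hanti : S.AntiInvariant)
    (heq : ∀ X, S.horiz X = X → ∃ U, S.vert U = U ∧ S.phi U = X) (X : VF) (hX : S.horiz X = X) :
    S.vert (S.phi X) = S.phi X := by
  have h := S.vert_add_horiz (S.phi X)
  rw [S.horiz_phi_horiz hxi hanti heq X hX, add_zero] at h
  exact h

lemma A_phi (hxi : S.vert S.xi = S.xi) (hanti : S.AntiInvariant)
    (heq : ∀ X, S.horiz X = X → ∃ U, S.vert U = U ∧ S.phi U = X) (X Y : VF) (hX : S.horiz X = X) (hY : S.horiz Y = Y) :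
    S.A X (S.phi Y) = S.phi (S.vert (S.nabla X Y)) := by
  have hs := S.sasaki X Y
  rw [S.eta_horiz hxi Y hY, zero_smul, sub_zero, sub_eq_iff_eq_add] at hs
  have hxih : S.horiz S.xi = 0 := by rw [← hxi]; exact S.horiz_vert S.xi
  set W := S.nabla X Y with hWdef
  have hphiW : S.phi W = S.phi (S.vert W) + S.phi (S.horiz W) := by
    rw [← S.phi_add, S.vert_add_horiz]
  have hmain : S.horiz (S.nabla X (S.phi Y)) = S.phi (S.vert W) := by
    rw [hs, S.horiz_add, S.horiz_smul, hxih, smul_zero, zero_add, hphiW,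
      S.horiz_add, hanti (S.vert W) (S.vert_vert W),
      S.horiz_phi_horiz hxi hanti heq (S.horiz W) (S.horiz_idem W), add_zero]
  show S.vert (S.nabla (S.horiz X) (S.horiz (S.phi Y)))
      + S.horiz (S.nabla (S.horiz X) (S.vert (S.phi Y)))
      = S.phi (S.vert W)
  rw [hX, S.horiz_phi_horiz hxi hanti heq Y hY, S.nabla_zero_right, S.vert_zero,
    zero_add, S.vert_phi_horiz hxi hanti heq Y hY, hmain]

lemma nabla_xi_horiz (hxi : S.vert S.xi = S.xi) (X : VF) (hX : S.horiz X = X) :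
    S.nabla X S.xi = -S.phi X := by
  have hs := S.sasaki X S.xi
  rw [S.phi_xi, S.nabla_zero_right, S.eta_xi, one_smul, ← S.eta_g,
    S.eta_horiz hxi X hX, zero_smul, zero_sub, zero_sub, neg_inj] at hs
  have h2 := congrArg S.phi hs
  rw [S.phi_phi, S.eta_g, S.g_nabla_xi_xi, zero_smul, add_zero] at h2
  exact neg_eq_iff_eq_neg.mp h2

end Aux

end SasakianSubmersionData

open SasakianSubmersionData in
/-- Corollary 2: for an anti-invariant Riemannian submersion from a Sasakian
manifold with `φ(ker F_*) = (ker F_*)^⊥`, the horizontal distribution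
`(ker F_*)^⊥` defines a totally geodesic foliation on `M` iff `A_X φY = 0`
for all horizontal `X, Y`. -/
theorem horizontal_totally_geodesic_iff {Fn VF : Type} [CommRing Fn]
    [Algebra ℝ Fn] [AddCommGroup VF] [Module Fn VF]
    (S : SasakianSubmersionData Fn VF)
    (hxi : S.vert S.xi = S.xi)
    (hanti : S.AntiInvariant)
    (heq : ∀ X, S.horiz X = X → ∃ U, S.vert U = U ∧ S.phi U = X) :
    (∀ X Y, S.horiz X = X → S.horiz Y = Y →
        S.horiz (S.nabla X Y) = S.nabla X Y) ↔
      (∀ X Y, S.horiz X = X → S.horiz Y = Y → S.A X (S.phi Y) = 0) := by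
  constructor
  · intro h X Y hX hY
    rw [S.A_phi hxi hanti heq X Y hX hY]
    have hv : S.vert (S.nabla X Y) = 0 := by
      have h1 := S.vert_add_horiz (S.nabla X Y)
      rw [h X Y hX hY] at h1
      exact add_right_cancel (h1.trans (zero_add (S.nabla X Y)).symm)
    rw [hv, S.phi_zero]
  · intro h X Y hX hY
    have hA := h X Y hX hY
    rw [S.A_phi hxi hanti heq X Y hX hY] at hA
    -- η(∇_X Y) = 0
    have hgYxi : S.g Y S.xi = 0 := S.g_horiz_vert' Y S.xi hY hxi
    have hnxi : S.nabla X S.xi = -S.phi X := S.nabla_xi_horiz hxi X hX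
    have hc := S.compat X Y S.xi
    rw [hgYxi, S.der_zero, hnxi, S.g_neg_right,
      S.g_horiz_vert' Y (S.phi X) hY (S.vert_phi_horiz hxi hanti heq X hX),
      neg_zero, add_zero] at hc
    -- η(vert ∇_X Y) = 0
    have hetav : S.eta (S.vert (S.nabla X Y)) = 0 := by
      have h1 := congrArg S.eta (S.vert_add_horiz (S.nabla X Y))
      rw [S.eta_add, S.eta_horiz hxi (S.horiz (S.nabla X Y))
        (S.horiz_idem (S.nabla X Y)), add_zero] at h1
      rw [h1, S.eta_g]
      exact hc.symm
    -- vert ∇_X Y = 0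
    have h2 := congrArg S.phi hA
    rw [S.phi_phi, S.phi_zero, hetav, zero_smul, add_zero, neg_eq_zero] at h2
    have h3 := S.vert_add_horiz (S.nabla X Y)
    rw [h2, zero_add] at h3
    exact h3
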